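/- With X̄ = (0,-x₃,x₂,0,0,y₃,-y₂) and Ȳ = (0,0,0,-y₁,y₀,-y₃,y₂) tangent to the torus orbit at p = (x₁,x₂,x₃,y₀,y₁,y₂,y₃) ∈ S⁶ ⊂ Im 𝕆, and (X,Y) the orthonormalization of (X̄,Ȳ), the cosine of the slant angle |⟨X, p×Y⟩| equals |x₃y₁y₂ - x₂y₀y₂ - x₂y₁y₃ - x₃y₀y₃| / √(αβ - (x₂²+x₃²)²), where α = x₂²+x₃²+y₀²+y₁² and β = x₂²+x₃²+y₂²+y₃², assuming α, β > 0 and αβ > (x₂²+x₃²)². -/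

import Mathlib

noncomputable section

open Quaternion

/-- Octonions as pairs of quaternions (Cayley–Dickson construction). -/
abbrev Octo : Type := ℍ[ℝ] × ℍ[ℝ]

/-- Octonion multiplication: (q,r)(s,t) = (qs - t̄r, tq + rs̄). -/
def omul (x y : Octo) : Octo :=
  (x.1 * y.1 - star y.2 * x.2, y.2 * x.1 + x.2 * star y.1)

/-- Octonion conjugation: (q,r)̄ = (q̄, -r). -/
def oconj (x : Octo) : Octo := (star x.1, -x.2)

/-- Inner product ⟨x,y⟩ = (x ȳ + y x̄)/2 (a real multiple of 1, returned as a real). -/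
def oinner (x y : Octo) : ℝ :=
  ((omul x (oconj y) + omul y (oconj x)).1).re / 2

/-- x is an imaginary octonion: x + x̄ = 0. -/
def IsIm (x : Octo) : Prop := x + oconj x = 0

/-- Embedding of the reals into the octonions. -/
def oR (r : ℝ) : Octo := ((r : ℍ[ℝ]), 0)

/-- Cross product x×y = (xy - yx)/2. -/
def ocross (x y : Octo) : Octo := (2⁻¹ : ℝ) • (omul x y - omul y x)

/-- Norm of an octonion. -/
def onorm (x : Octo) : ℝ := Real.sqrt (oinner x x)

/-- Associator [x,y,z] = (xy)z - x(yz). -/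
def oassoc (x y z : Octo) : Octo := omul (omul x y) z - omul x (omul y z)

/-- f₁,f₂,f₃ are orthonormal. -/
def OrthoTriple (f1 f2 f3 : Octo) : Prop :=
  oinner f1 f1 = 1 ∧ oinner f2 f2 = 1 ∧ oinner f3 f3 = 1 ∧
  oinner f1 f2 = 0 ∧ oinner f1 f3 = 0 ∧ oinner f2 f3 = 0


/-- Imaginary octonion with coordinates (x₁,x₂,x₃,y₀,y₁,y₂,y₃) in the standard basis
    e₁,…,e₇ of Im 𝕆. -/
def oofC (x1 x2 x3 y0 y1 y2 y3 : ℝ) : Octo := (⟨0, x1, x2, x3⟩, ⟨y0, y1, y2, y3⟩)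

lemma aux_omul_smul_left (r : ℝ) (x y : Octo) : omul (r • x) y = r • omul x y := by
  simp [omul, Prod.smul_def, smul_sub, smul_add, mul_smul_comm, smul_mul_assoc]

lemma aux_omul_smul_right (r : ℝ) (x y : Octo) : omul x (r • y) = r • omul x y := by
  simp [omul, Prod.smul_def, smul_sub, smul_add, mul_smul_comm, smul_mul_assoc]

lemma aux_oconj_smul (r : ℝ) (x : Octo) : oconj (r • x) = r • oconj x := by
  simp [oconj, Prod.smul_def]

lemma aux_oinner_smul_left (r : ℝ) (x y : Octo) : oinner (r • x) y = r * oinner x y := by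
  rw [oinner, oinner, aux_omul_smul_left, aux_oconj_smul, aux_omul_smul_right]
  simp only [Prod.smul_fst, Quaternion.re_smul, smul_eq_mul, Prod.fst_add, Quaternion.re_add]
  ring

lemma aux_oinner_smul_right (r : ℝ) (x y : Octo) : oinner x (r • y) = r * oinner x y := by
  rw [oinner, oinner, aux_oconj_smul, aux_omul_smul_right, aux_omul_smul_left]
  simp only [Prod.smul_fst, Quaternion.re_smul, smul_eq_mul, Prod.fst_add, Quaternion.re_add]
  ring

lemma aux_omul_sub_left (x y z : Octo) : omul (x - y) z = omul x z - omul y z := by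
  simp only [omul, Prod.fst_sub, Prod.snd_sub, sub_mul, mul_sub, Prod.mk_sub_mk, Prod.mk.injEq]
  constructor <;> abel

lemma aux_omul_sub_right (x y z : Octo) : omul x (y - z) = omul x y - omul x z := by
  simp only [omul, Prod.fst_sub, Prod.snd_sub, sub_mul, mul_sub, Prod.mk_sub_mk, Prod.mk.injEq,
    star_sub]
  constructor <;> abel

lemma aux_oconj_sub (x y : Octo) : oconj (x - y) = oconj x - oconj y := by
  simp only [oconj, Prod.fst_sub, Prod.snd_sub, star_sub, Prod.mk_sub_mk, Prod.mk.injEq]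
  exact ⟨trivial, by abel⟩

lemma aux_oinner_sub_left (x y z : Octo) : oinner (x - y) z = oinner x z - oinner y z := by
  rw [oinner, oinner, oinner, aux_omul_sub_left, aux_oconj_sub, aux_omul_sub_right]
  simp only [Prod.fst_add, Prod.fst_sub, Quaternion.re_add, Quaternion.re_sub]
  ring

lemma aux_oinner_sub_right (x y z : Octo) : oinner x (y - z) = oinner x y - oinner x z := by
  rw [oinner, oinner, oinner, aux_oconj_sub, aux_omul_sub_right, aux_omul_sub_left]
  simp only [Prod.fst_add, Prod.fst_sub, Quaternion.re_add, Quaternion.re_sub]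
  ring

lemma aux_ocross_sub_right (x y z : Octo) : ocross x (y - z) = ocross x y - ocross x z := by
  rw [ocross, ocross, ocross, aux_omul_sub_right, aux_omul_sub_left, ← smul_sub]
  congr 1
  abel

lemma aux_ocross_smul_right (r : ℝ) (x y : Octo) : ocross x (r • y) = r • ocross x y := by
  rw [ocross, ocross, aux_omul_smul_right, aux_omul_smul_left, ← smul_sub, smul_comm]

section
variable (x1 x2 x3 y0 y1 y2 y3 : ℝ)
@[simp] lemma oofC_1re : (oofC x1 x2 x3 y0 y1 y2 y3).1.re = 0 := rfl
@[simp] lemma oofC_1i : (oofC x1 x2 x3 y0 y1 y2 y3).1.imI = x1 := rfl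
@[simp] lemma oofC_1j : (oofC x1 x2 x3 y0 y1 y2 y3).1.imJ = x2 := rfl
@[simp] lemma oofC_1k : (oofC x1 x2 x3 y0 y1 y2 y3).1.imK = x3 := rfl
@[simp] lemma oofC_2re : (oofC x1 x2 x3 y0 y1 y2 y3).2.re = y0 := rfl
@[simp] lemma oofC_2i : (oofC x1 x2 x3 y0 y1 y2 y3).2.imI = y1 := rfl
@[simp] lemma oofC_2j : (oofC x1 x2 x3 y0 y1 y2 y3).2.imJ = y2 := rfl
@[simp] lemma oofC_2k : (oofC x1 x2 x3 y0 y1 y2 y3).2.imK = y3 := rfl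
end

lemma aux1 (x2 x3 y2 y3 : ℝ) :
    oinner (oofC 0 (-x3) x2 0 0 y3 (-y2)) (oofC 0 (-x3) x2 0 0 y3 (-y2)) =
      x2 ^ 2 + x3 ^ 2 + y2 ^ 2 + y3 ^ 2 := by
  simp [oinner, omul, oconj, Quaternion.ext_iff, Quaternion.re_mul]
  ring

lemma aux2 (y0 y1 y2 y3 : ℝ) :
    oinner (oofC 0 0 0 (-y1) y0 (-y3) y2) (oofC 0 0 0 (-y1) y0 (-y3) y2) =
      y0 ^ 2 + y1 ^ 2 + y2 ^ 2 + y3 ^ 2 := by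
  simp [oinner, omul, oconj, Quaternion.ext_iff, Quaternion.re_mul]
  ring

lemma aux3 (x2 x3 y0 y1 y2 y3 : ℝ) :
    oinner (oofC 0 0 0 (-y1) y0 (-y3) y2) (oofC 0 (-x3) x2 0 0 y3 (-y2)) =
      -(y2 ^ 2 + y3 ^ 2) := by
  simp [oinner, omul, oconj, Quaternion.ext_iff, Quaternion.re_mul]
  ring

lemma aux4 (x2 x3 y0 y1 y2 y3 : ℝ) :
    oinner (oofC 0 (-x3) x2 0 0 y3 (-y2)) (oofC 0 0 0 (-y1) y0 (-y3) y2) =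
      -(y2 ^ 2 + y3 ^ 2) := by
  simp [oinner, omul, oconj, Quaternion.ext_iff, Quaternion.re_mul]
  ring

lemma aux5 (x1 x2 x3 y0 y1 y2 y3 : ℝ) :
    oinner (oofC 0 (-x3) x2 0 0 y3 (-y2))
      (ocross (oofC x1 x2 x3 y0 y1 y2 y3) (oofC 0 0 0 (-y1) y0 (-y3) y2)) =
      -(x3 * y1 * y2 - x2 * y0 * y2 - x2 * y1 * y3 - x3 * y0 * y3) := by
  simp [oinner, omul, oconj, ocross, Quaternion.ext_iff, Quaternion.re_mul]
  ring

lemma aux6 (x1 x2 x3 y0 y1 y2 y3 : ℝ) :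
    oinner (oofC 0 (-x3) x2 0 0 y3 (-y2))
      (ocross (oofC x1 x2 x3 y0 y1 y2 y3) (oofC 0 (-x3) x2 0 0 y3 (-y2))) = 0 := by
  simp [oinner, omul, oconj, ocross, Quaternion.ext_iff, Quaternion.re_mul]
  ring

/-- The cosine of the slant angle of the torus orbit through p ∈ S⁶, computed from the
    orthonormalization (X,Y) of the tangent vectors (X̄,Ȳ), equals
    |x₃y₁y₂ - x₂y₀y₂ - x₂y₁y₃ - x₃y₀y₃| / √(αβ - (x₂²+x₃²)²). -/
theorem stmt17 (x1 x2 x3 y0 y1 y2 y3 : ℝ)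
    (hp : x1 ^ 2 + x2 ^ 2 + x3 ^ 2 + y0 ^ 2 + y1 ^ 2 + y2 ^ 2 + y3 ^ 2 = 1)
    (ha : 0 < x2 ^ 2 + x3 ^ 2 + y0 ^ 2 + y1 ^ 2)
    (hb : 0 < x2 ^ 2 + x3 ^ 2 + y2 ^ 2 + y3 ^ 2)
    (hd : (x2 ^ 2 + x3 ^ 2) ^ 2 <
      (x2 ^ 2 + x3 ^ 2 + y0 ^ 2 + y1 ^ 2) * (x2 ^ 2 + x3 ^ 2 + y2 ^ 2 + y3 ^ 2)) :
    let p := oofC x1 x2 x3 y0 y1 y2 y3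
    let Xb := oofC 0 (-x3) x2 0 0 y3 (-y2)
    let Yb := oofC 0 0 0 (-y1) y0 (-y3) y2
    let X := (onorm Xb)⁻¹ • Xb
    let W := Yb - oinner Yb X • X
    let Y := (onorm W)⁻¹ • W
    |oinner X (ocross p Y)| =
      |x3 * y1 * y2 - x2 * y0 * y2 - x2 * y1 * y3 - x3 * y0 * y3| /
        Real.sqrt ((x2 ^ 2 + x3 ^ 2 + y0 ^ 2 + y1 ^ 2) * (x2 ^ 2 + x3 ^ 2 + y2 ^ 2 + y3 ^ 2) -
          (x2 ^ 2 + x3 ^ 2) ^ 2) := by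
  intro p Xb Yb X W Y
  have hβ : (0:ℝ) < x2 ^ 2 + x3 ^ 2 + y2 ^ 2 + y3 ^ 2 := hb
  set β : ℝ := x2 ^ 2 + x3 ^ 2 + y2 ^ 2 + y3 ^ 2 with hβdef
  have hD : (0:ℝ) <
      (x2 ^ 2 + x3 ^ 2 + y0 ^ 2 + y1 ^ 2) * β - (x2 ^ 2 + x3 ^ 2) ^ 2 := sub_pos.mpr hd
  set D : ℝ := (x2 ^ 2 + x3 ^ 2 + y0 ^ 2 + y1 ^ 2) * β - (x2 ^ 2 + x3 ^ 2) ^ 2 with hDdef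
  have hsβ : (0:ℝ) < Real.sqrt β := Real.sqrt_pos.mpr hβ
  have hsD : (0:ℝ) < Real.sqrt D := Real.sqrt_pos.mpr hD
  have hsβ2 : Real.sqrt β * Real.sqrt β = β := Real.mul_self_sqrt hβ.le
  have hXbXb : oinner Xb Xb = β := aux1 x2 x3 y2 y3
  have hYbYb : oinner Yb Yb = y0 ^ 2 + y1 ^ 2 + y2 ^ 2 + y3 ^ 2 := aux2 y0 y1 y2 y3
  have hYbXb : oinner Yb Xb = -(y2 ^ 2 + y3 ^ 2) := aux3 x2 x3 y0 y1 y2 y3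
  have hXbYb : oinner Xb Yb = -(y2 ^ 2 + y3 ^ 2) := aux4 x2 x3 y0 y1 y2 y3
  have hcross1 : oinner Xb (ocross p Yb) =
      -(x3 * y1 * y2 - x2 * y0 * y2 - x2 * y1 * y3 - x3 * y0 * y3) :=
    aux5 x1 x2 x3 y0 y1 y2 y3
  have hcross0 : oinner Xb (ocross p Xb) = 0 := aux6 x1 x2 x3 y0 y1 y2 y3
  have hnX : onorm Xb = Real.sqrt β := by rw [onorm, hXbXb]
  set c : ℝ := -(y2 ^ 2 + y3 ^ 2) with hcdef
  have hX : X = (Real.sqrt β)⁻¹ • Xb := by rw [show X = (onorm Xb)⁻¹ • Xb from rfl, hnX]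
  have hβinv : (Real.sqrt β)⁻¹ * (Real.sqrt β)⁻¹ = β⁻¹ := by
    rw [← mul_inv, hsβ2]
  have hscal : (Real.sqrt β)⁻¹ * c * (Real.sqrt β)⁻¹ = c / β := by
    rw [div_eq_mul_inv, ← hβinv]; ring
  have hW : W = Yb - (c / β) • Xb := by
    rw [show W = Yb - oinner Yb X • X from rfl, hX, aux_oinner_smul_right, hYbXb, smul_smul,
      hscal]
  have hWW : oinner W W = D / β := by
    rw [hW, aux_oinner_sub_left, aux_oinner_sub_right, aux_oinner_sub_right,
      aux_oinner_smul_left, aux_oinner_smul_right, aux_oinner_smul_left,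
      aux_oinner_smul_right, hYbYb, hYbXb, hXbYb, hXbXb, hcdef, hDdef]
    field_simp
    ring
  have hnW : onorm W = Real.sqrt D / Real.sqrt β := by
    rw [onorm, hWW, Real.sqrt_div hD.le]
  have key : oinner X (ocross p Y) =
      (Real.sqrt β)⁻¹ * ((Real.sqrt D / Real.sqrt β)⁻¹ *
        (-(x3 * y1 * y2 - x2 * y0 * y2 - x2 * y1 * y3 - x3 * y0 * y3) - c / β * 0)) := by
    rw [show Y = (onorm W)⁻¹ • W from rfl, hnW, hX, aux_oinner_smul_left,
      aux_ocross_smul_right, aux_oinner_smul_right, hW, aux_ocross_sub_right,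
      aux_ocross_smul_right, aux_oinner_sub_right, aux_oinner_smul_right, hcross1, hcross0]
  rw [key, mul_zero, sub_zero, inv_div]
  have hfin : (Real.sqrt β)⁻¹ * (Real.sqrt β / Real.sqrt D *
      -(x3 * y1 * y2 - x2 * y0 * y2 - x2 * y1 * y3 - x3 * y0 * y3)) =
      -(x3 * y1 * y2 - x2 * y0 * y2 - x2 * y1 * y3 - x3 * y0 * y3) / Real.sqrt D := by
    field_simp
  rw [hfin, abs_div, abs_neg, abs_of_pos hsD]
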